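/- Let M = {(1,1), (1,−1), (−1,1), (−1,−1), (2,2), (2,−2), (−2,2), (−2,−2)} ⊂ ℝ² and g = ((α/2)|·|₂² + δ_M)** for α > 0. Then the Fenchel conjugate is g*(q) = max{|q|₁ − α, 2|q|₁ − 4α} for all q ∈ ℝ²; i.e., g*(q) = |q|₁ − α if |q|₁ ≤ 3α and g*(q) = 2|q|₁ − 4α if |q|₁ ≥ 3α. -/

import Mathlib

open MeasureTheory Set Filter Topology

noncomputable section

abbrev Vec (k : ℕ) := EuclideanSpace ℝ (Fin k)

/-- The Fenchel (Legendre–Fenchel) conjugate of an extended-real-valued function on a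
real inner product space. -/
def EConj {X : Type*} [NormedAddCommGroup X] [InnerProductSpace ℝ X]
    (f : X → EReal) (p : X) : EReal :=
  ⨆ v, ((inner ℝ p v : ℝ) : EReal) - f v

/-- The convex subdifferential of an extended-real-valued function on a real inner
product space. -/
def ESubdiff {X : Type*} [NormedAddCommGroup X] [InnerProductSpace ℝ X]
    (f : X → EReal) (u : X) : Set X :=
  {p | ∀ v, f u + ((inner ℝ p (v - u) : ℝ) : EReal) ≤ f v}

/-- The vector `(a, b) ∈ ℝ²`. -/
def mk2 (a b : ℝ) : Vec 2 := WithLp.toLp 2 ![a, b]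

/-- The concentric-corners admissible set
`M = {(±1,±1), (±2,±2)} ⊂ ℝ²`. -/
def Mconc : Set (Vec 2) :=
  {mk2 1 1, mk2 1 (-1), mk2 (-1) 1, mk2 (-1) (-1),
   mk2 2 2, mk2 2 (-2), mk2 (-2) 2, mk2 (-2) (-2)}

open Classical in
/-- The multibang penalty `g = ((α/2)|·|₂² + δ_M)**` for the concentric-corners set. -/
def gConc (α : ℝ) : Vec 2 → EReal :=
  EConj (EConj (fun v => if v ∈ Mconc then ((α/2 * ‖v‖^2 : ℝ) : EReal) else ⊤))

section Aux

variable {X : Type*} [NormedAddCommGroup X] [InnerProductSpace ℝ X]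

lemma EConj_anti' {f g : X → EReal} (h : ∀ v, f v ≤ g v) (p : X) : EConj g p ≤ EConj f p :=
  iSup_mono fun v => EReal.sub_le_sub le_rfl (h v)

lemma biconj_le' (f : X → EReal) (v : X) : EConj (EConj f) v ≤ f v := by
  refine iSup_le fun p => ?_
  have hp : ((inner ℝ p v : ℝ) : EReal) - f v ≤ EConj f p :=
    le_iSup (fun w => ((inner ℝ p w : ℝ) : EReal) - f w) v
  rw [real_inner_comm]
  rcases eq_or_ne (f v) ⊤ with htop | htop
  · rw [htop]; exact le_top
  rcases eq_or_ne (f v) ⊥ with hbot | hbot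
  · rw [hbot] at hp ⊢
    have : EConj f p = ⊤ := top_le_iff.mp (by simpa using hp)
    simp [this]
  · set c : ℝ := (f v).toReal with hc
    have hfv : f v = (c : EReal) := (EReal.coe_toReal htop hbot).symm
    rw [hfv, ← EReal.coe_sub] at hp
    rw [hfv]
    have h2 := EReal.sub_le_sub (le_refl ((inner ℝ p v : ℝ) : EReal)) hp
    calc ((inner ℝ p v : ℝ) : EReal) - EConj f p
        ≤ ((inner ℝ p v : ℝ) : EReal) - ((inner ℝ p v - c : ℝ) : EReal) := h2
      _ = ((c : ℝ) : EReal) := by rw [← EReal.coe_sub]; norm_num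

lemma triple_conj' (f : X → EReal) (p : X) : EConj (EConj (EConj f)) p = EConj f p :=
  le_antisymm (biconj_le' (EConj f) p) (EConj_anti' (biconj_le' f) p)

end Aux

lemma inner_mk2 (q : Vec 2) (a b : ℝ) : (inner ℝ q (mk2 a b) : ℝ) = q 0 * a + q 1 * b := by
  simp [mk2, PiLp.inner_apply, Fin.sum_univ_two, RCLike.inner_apply, mul_comm]

lemma norm_mk2 (a b : ℝ) : ‖mk2 a b‖^2 = a^2 + b^2 := by
  rw [← real_inner_self_eq_norm_sq, inner_mk2]
  simp [mk2, sq]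

open Classical in
lemma conj_F (α : ℝ) (q : Vec 2) :
    EConj (fun v => if v ∈ Mconc then ((α/2 * ‖v‖^2 : ℝ) : EReal) else ⊤) q
      = ((max (|q 0| + |q 1| - α) (2*(|q 0| + |q 1|) - 4*α) : ℝ) : EReal) := by
  set F : Vec 2 → EReal :=
    fun v => if v ∈ Mconc then ((α/2 * ‖v‖^2 : ℝ) : EReal) else ⊤ with hF
  have e0 := le_abs_self (q 0); have e0' := neg_abs_le (q 0)
  have e1 := le_abs_self (q 1); have e1' := neg_abs_le (q 1)
  refine le_antisymm (iSup_le fun v => ?_) ?_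
  · by_cases hv : v ∈ Mconc
    · have hFv : F v = ((α/2 * ‖v‖^2 : ℝ) : EReal) := if_pos hv
      rw [hFv, ← EReal.coe_sub, EReal.coe_le_coe_iff]
      simp only [Mconc, Set.mem_insert_iff, Set.mem_singleton_iff] at hv
      rcases hv with rfl | rfl | rfl | rfl | rfl | rfl | rfl | rfl <;>
        rw [inner_mk2, norm_mk2] <;>
        first
          | exact le_trans (by nlinarith) (le_max_left _ _)
          | exact le_trans (by nlinarith) (le_max_right _ _)
    · have hFv : F v = ⊤ := if_neg hv
      rw [hFv, EReal.sub_top]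
      exact bot_le
  · have key : ∀ a b r : ℝ, mk2 a b ∈ Mconc →
        r = q 0 * a + q 1 * b - α/2*(a^2+b^2) → (r : EReal) ≤ EConj F q := by
      intro a b r hm hr
      have hFv : F (mk2 a b) = ((α/2 * ‖mk2 a b‖^2 : ℝ) : EReal) := if_pos hm
      calc (r : EReal)
          = ((inner ℝ q (mk2 a b) - α/2 * ‖mk2 a b‖^2 : ℝ) : EReal) := by
            rw [inner_mk2, norm_mk2, hr]
        _ = ((inner ℝ q (mk2 a b) : ℝ) : EReal) - F (mk2 a b) := by
            rw [hFv, EReal.coe_sub]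
        _ ≤ EConj F q := le_iSup (fun w => ((inner ℝ q w : ℝ) : EReal) - F w) (mk2 a b)
    have h1 : ((|q 0| + |q 1| - α : ℝ) : EReal) ≤ EConj F q := by
      rcases le_or_gt 0 (q 0) with h0 | h0 <;> rcases le_or_gt 0 (q 1) with hq1 | hq1
      · exact key 1 1 _ (by simp [Mconc]) (by rw [abs_of_nonneg h0, abs_of_nonneg hq1]; ring)
      · exact key 1 (-1) _ (by simp [Mconc]) (by rw [abs_of_nonneg h0, abs_of_neg hq1]; ring)
      · exact key (-1) 1 _ (by simp [Mconc]) (by rw [abs_of_neg h0, abs_of_nonneg hq1]; ring)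
      · exact key (-1) (-1) _ (by simp [Mconc]) (by rw [abs_of_neg h0, abs_of_neg hq1]; ring)
    have h2 : ((2*(|q 0| + |q 1|) - 4*α : ℝ) : EReal) ≤ EConj F q := by
      rcases le_or_gt 0 (q 0) with h0 | h0 <;> rcases le_or_gt 0 (q 1) with hq1 | hq1
      · exact key 2 2 _ (by simp [Mconc]) (by rw [abs_of_nonneg h0, abs_of_nonneg hq1]; ring)
      · exact key 2 (-2) _ (by simp [Mconc]) (by rw [abs_of_nonneg h0, abs_of_neg hq1]; ring)
      · exact key (-2) 2 _ (by simp [Mconc]) (by rw [abs_of_neg h0, abs_of_nonneg hq1]; ring)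
      · exact key (-2) (-2) _ (by simp [Mconc]) (by rw [abs_of_neg h0, abs_of_neg hq1]; ring)
    rcases le_total (|q 0| + |q 1| - α) (2*(|q 0| + |q 1|) - 4*α) with h | h
    · rw [max_eq_right h]; exact h2
    · rw [max_eq_left h]; exact h1

/-- Fenchel conjugate for concentric corners: for
`M = {(±1,±1), (±2,±2)}` and `g = ((α/2)|·|₂² + δ_M)**`, the Fenchel conjugate is
`g*(q) = max{|q|₁ − α, 2|q|₁ − 4α}`, i.e. `|q|₁ − α` for `|q|₁ ≤ 3α` and
`2|q|₁ − 4α` for `|q|₁ ≥ 3α`. -/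
theorem fenchel_conjugate_concentric (α : ℝ) (hα : 0 < α) :
    ∀ q : Vec 2,
      (EConj (gConc α) q =
        ((max (|q 0| + |q 1| - α) (2*(|q 0| + |q 1|) - 4*α) : ℝ) : EReal))
      ∧ (|q 0| + |q 1| ≤ 3*α →
          EConj (gConc α) q = ((|q 0| + |q 1| - α : ℝ) : EReal))
      ∧ (3*α ≤ |q 0| + |q 1| →
          EConj (gConc α) q = ((2*(|q 0| + |q 1|) - 4*α : ℝ) : EReal)) := by
  intro q
  have hmain : EConj (gConc α) q =
      ((max (|q 0| + |q 1| - α) (2*(|q 0| + |q 1|) - 4*α) : ℝ) : EReal) := by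
    unfold gConc
    rw [triple_conj', conj_F]
  refine ⟨hmain, fun h => ?_, fun h => ?_⟩
  · rw [hmain, max_eq_left (by linarith)]
  · rw [hmain, max_eq_right (by linarith)]
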